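/- F2 is atomless conditionally to F1 if and only if for every A ∈ F2 with P[A] > 0 there exists B ∈ F2 with B ⊆ A such that P[{ω : 0 < E[1_B | F1](ω) < E[1_A | F1](ω)}] > 0. -/

import Mathlib

open MeasureTheory ProbabilityTheory Set
open scoped ENNReal

/-- The conditional expectation (under `P`, defined on `F2`) of the indicator of `A`
given the sub-σ-algebra `F1`. -/
noncomputable def cexpInd {Ω : Type*} (F1 F2 : MeasurableSpace Ω) (P : @Measure Ω F2)
    (A : Set Ω) : Ω → ℝ :=
  P[A.indicator (fun _ => (1 : ℝ)) | F1]

/-- `F2` is atomless conditionally to `F1`: for every `A ∈ F2` there is `B ∈ F2`, `B ⊆ A`,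
with `0 < E[1_B | F1] < E[1_A | F1]` almost surely on the set `{E[1_A | F1] > 0}`. -/
def CondAtomless {Ω : Type*} (F1 F2 : MeasurableSpace Ω) (P : @Measure Ω F2) : Prop :=
  ∀ A : Set Ω, MeasurableSet[F2] A → ∃ B : Set Ω, MeasurableSet[F2] B ∧ B ⊆ A ∧
    ∀ᵐ ω ∂P, 0 < cexpInd F1 F2 P A ω →
      0 < cexpInd F1 F2 P B ω ∧ cexpInd F1 F2 P B ω < cexpInd F1 F2 P A ω

section aux
set_option linter.unusedSectionVars false
variable {Ω : Type*} {F1 F2 : MeasurableSpace Ω} (hle : F1 ≤ F2)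
  (P : @Measure Ω F2) [IsProbabilityMeasure P]

lemma intInd {A : Set Ω} (hA : MeasurableSet[F2] A) :
    Integrable (A.indicator (fun _ => (1:ℝ))) P :=
  (integrable_const 1).indicator hA

lemma cexpInd_nonneg (A : Set Ω) : 0 ≤ᵐ[P] cexpInd F1 F2 P A :=
  condExp_nonneg (ae_of_all _ fun ω => indicator_nonneg (fun _ _ => zero_le_one) ω)

include hle in
lemma cexpInd_integral {A : Set Ω} (hA : MeasurableSet[F2] A) :
    ∫ ω, cexpInd F1 F2 P A ω ∂P = (P A).toReal := by
  haveI : SigmaFinite (P.trim hle) := by infer_instance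
  refine (integral_condExp hle).trans ?_
  exact integral_indicator_one (μ := P) hA

lemma cexpInd_meas (A : Set Ω) : Measurable[F1] (cexpInd F1 F2 P A) :=
  stronglyMeasurable_condExp.measurable

lemma measSet_pos {f : Ω → ℝ} (hf : Measurable[F1] f) :
    MeasurableSet[F1] {ω | 0 < f ω} := hf measurableSet_Ioi

lemma measSet_lt {f g : Ω → ℝ} (hf : Measurable[F1] f) (hg : Measurable[F1] g) :
    MeasurableSet[F1] {ω | f ω < g ω} := by
  have hm : Measurable[F1] (fun ω => g ω - f ω) := hg.sub hf
  have h2 : MeasurableSet[F1] ((fun ω => g ω - f ω) ⁻¹' Set.Ioi 0) := hm measurableSet_Ioi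
  have h3 : {ω | f ω < g ω} = (fun ω => g ω - f ω) ⁻¹' Set.Ioi 0 := by
    ext ω; simp [sub_pos]
  rw [h3]; exact h2

include hle in
lemma cexpInd_pos_set {A : Set Ω} (hA : MeasurableSet[F2] A) (hPA : 0 < P A) :
    0 < P {ω | 0 < cexpInd F1 F2 P A ω} := by
  by_contra h
  push_neg at h
  have h0 : P {ω | 0 < cexpInd F1 F2 P A ω} = 0 := le_antisymm h zero_le
  have hle0 : ∀ᵐ ω ∂P, ¬ (0 < cexpInd F1 F2 P A ω) := by
    rw [ae_iff]; simpa using h0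
  have heq : cexpInd F1 F2 P A =ᵐ[P] 0 := by
    filter_upwards [hle0, cexpInd_nonneg P A] with ω h1 h2
    exact le_antisymm (not_lt.mp h1) h2
  have : ∫ ω, cexpInd F1 F2 P A ω ∂P = 0 := by
    rw [integral_congr_ae heq]; simp
  rw [cexpInd_integral hle P hA] at this
  have : P A = 0 := by
    have := ENNReal.toReal_eq_zero_iff (P A) |>.mp this
    rcases this with h | h
    · exact h
    · exact absurd h (measure_ne_top P A)
  exact absurd this hPA.ne'

lemma cexpInd_inter {A D : Set Ω} (hA : MeasurableSet[F2] A)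
    (hD : MeasurableSet[F1] D) :
    cexpInd F1 F2 P (D ∩ A) =ᵐ[P] D.indicator (cexpInd F1 F2 P A) := by
  have h1 : (D ∩ A).indicator (fun _ => (1:ℝ)) = D.indicator (A.indicator fun _ => (1:ℝ)) := by
    rw [Set.indicator_indicator]
  unfold cexpInd
  rw [h1]
  exact condExp_indicator (intInd P hA) hD

include hle in
lemma glue_lemma {A : Set Ω} (hA : MeasurableSet[F2] A) (D B : ℕ → Set Ω)
    (hD : ∀ n, MeasurableSet[F1] (D n)) (hB : ∀ n, MeasurableSet[F2] (B n))
    (hBA : ∀ n, B n ⊆ A)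
    (hgood : ∀ n, ∀ᵐ ω ∂P, ω ∈ D n → 0 < cexpInd F1 F2 P (B n) ω ∧
      cexpInd F1 F2 P (B n) ω < cexpInd F1 F2 P A ω) :
    ∃ Bg : Set Ω, MeasurableSet[F2] Bg ∧ Bg ⊆ A ∧
      ∀ᵐ ω ∂P, ω ∈ ⋃ n, D n → 0 < cexpInd F1 F2 P Bg ω ∧
        cexpInd F1 F2 P Bg ω < cexpInd F1 F2 P A ω := by
  set E : ℕ → Set Ω := disjointed D with hE
  have hEmeas : ∀ n, MeasurableSet[F1] (E n) := MeasurableSet.disjointed hD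
  set Bg : Set Ω := ⋃ n, E n ∩ B n with hBg
  have hBgmeas : MeasurableSet[F2] Bg :=
    MeasurableSet.iUnion fun n => (hle _ (hEmeas n)).inter (hB n)
  have hBgA : Bg ⊆ A := iUnion_subset fun n => (inter_subset_right).trans (hBA n)
  refine ⟨Bg, hBgmeas, hBgA, ?_⟩
  have hkey : ∀ n, E n ∩ Bg = E n ∩ B n := by
    intro n
    ext ω
    simp only [hBg, mem_inter_iff, mem_iUnion]
    constructor
    · rintro ⟨hωE, m, hωEm, hωBm⟩
      rcases eq_or_ne m n with rfl | hmn
      · exact ⟨hωE, hωBm⟩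
      · exact absurd hωE (Set.disjoint_left.mp (disjoint_disjointed D hmn) hωEm)
    · rintro ⟨hωE, hωB⟩
      exact ⟨hωE, n, hωE, hωB⟩
  have heqn : ∀ n, ∀ᵐ ω ∂P, ω ∈ E n →
      cexpInd F1 F2 P Bg ω = cexpInd F1 F2 P (B n) ω := by
    intro n
    have h1 := cexpInd_inter P hBgmeas (hEmeas n)
    have h2 := cexpInd_inter P (hB n) (hEmeas n)
    rw [hkey n] at h1
    filter_upwards [h1, h2] with ω h1 h2 hωE
    have := h1.symm.trans h2
    simpa [Set.indicator_of_mem hωE] using this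
  have hall : ∀ᵐ ω ∂P, ∀ n, (ω ∈ E n →
      cexpInd F1 F2 P Bg ω = cexpInd F1 F2 P (B n) ω) ∧
      (ω ∈ D n → 0 < cexpInd F1 F2 P (B n) ω ∧
        cexpInd F1 F2 P (B n) ω < cexpInd F1 F2 P A ω) := by
    rw [ae_all_iff]
    intro n
    filter_upwards [heqn n, hgood n] with ω h1 h2
    exact ⟨h1, h2⟩
  filter_upwards [hall] with ω hω hωU
  have hωU' : ω ∈ ⋃ n, E n := by rw [hE, iUnion_disjointed]; exact hωU
  rcases mem_iUnion.mp hωU' with ⟨n, hωE⟩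
  have hωD : ω ∈ D n := disjointed_subset D n hωE
  rcases hω n with ⟨h1, h2⟩
  rw [h1 hωE]
  exact h2 hωD

end aux

theorem stmt4 {Ω : Type*} (F1 F2 : MeasurableSpace Ω) (hle : F1 ≤ F2)
    (P : @Measure Ω F2) (hP : @IsProbabilityMeasure Ω F2 P) :
    CondAtomless F1 F2 P ↔
      ∀ A : Set Ω, MeasurableSet[F2] A → 0 < P A →
        ∃ B : Set Ω, MeasurableSet[F2] B ∧ B ⊆ A ∧
          0 < P {ω | 0 < cexpInd F1 F2 P B ω ∧
            cexpInd F1 F2 P B ω < cexpInd F1 F2 P A ω} := by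
  constructor
  · -- forward
    intro h A hA hPA
    obtain ⟨B, hB, hBA, hae⟩ := h A hA
    refine ⟨B, hB, hBA, ?_⟩
    have h1 := cexpInd_pos_set hle P hA hPA
    refine lt_of_lt_of_le h1 (measure_mono_ae ?_)
    rw [ae_le_set, measure_eq_zero_iff_ae_notMem]
    filter_upwards [hae] with ω hω
    intro hmem
    exact hmem.2 (hω hmem.1)
  · -- backward
    intro h A hA
    set G : Set Ω := {ω | 0 < cexpInd F1 F2 P A ω} with hG
    have hGmeas : MeasurableSet[F1] G := measSet_pos (cexpInd_meas P A)
    set Good : Set (Set Ω) := {D | MeasurableSet[F1] D ∧ ∃ B : Set Ω,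
      MeasurableSet[F2] B ∧ B ⊆ A ∧ ∀ᵐ ω ∂P, ω ∈ D →
        0 < cexpInd F1 F2 P B ω ∧ cexpInd F1 F2 P B ω < cexpInd F1 F2 P A ω} with hGood
    have hGoodEmpty : (∅ : Set Ω) ∈ Good :=
      ⟨@MeasurableSet.empty Ω F1, ∅, @MeasurableSet.empty Ω F2, empty_subset _,
        ae_of_all _ fun ω hω => absurd hω (notMem_empty ω)⟩
    set c : ℝ≥0∞ := ⨆ D : Good, P (D : Set Ω) with hc
    have hc_le_one : c ≤ 1 := iSup_le fun D => prob_le_one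
    have hc_ne_top : c ≠ ⊤ := (lt_of_le_of_lt hc_le_one ENNReal.one_lt_top).ne
    have hseq : ∀ n : ℕ, ∃ D : Good, c - 1 / ((n : ℝ≥0∞) + 1) ≤ P (D : Set Ω) := by
      intro n
      by_cases hcc : c ≤ 1 / ((n : ℝ≥0∞) + 1)
      · exact ⟨⟨∅, hGoodEmpty⟩, by rw [tsub_eq_zero_of_le hcc]; exact zero_le⟩
      · push_neg at hcc
        have hc0 : c ≠ 0 := (lt_of_le_of_lt zero_le hcc).ne'
        have h1 : c - 1 / ((n : ℝ≥0∞) + 1) < c :=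
          ENNReal.sub_lt_self hc_ne_top hc0 (by simp)
        rcases lt_iSup_iff.mp h1 with ⟨D, hD⟩
        exact ⟨D, hD.le⟩
    choose Dseq hDseq using hseq
    have hmem : ∀ n, MeasurableSet[F1] ((Dseq n : Set Ω)) ∧ ∃ B : Set Ω,
        MeasurableSet[F2] B ∧ B ⊆ A ∧ ∀ᵐ ω ∂P, ω ∈ (Dseq n : Set Ω) →
          0 < cexpInd F1 F2 P B ω ∧ cexpInd F1 F2 P B ω < cexpInd F1 F2 P A ω :=
      fun n => (Dseq n).2
    choose hDmeas Bseq hBmeas hBsub hBgood using hmem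
    obtain ⟨Bg, hBgmeas, hBgA, hBgae⟩ :=
      glue_lemma hle P hA (fun n => (Dseq n : Set Ω)) Bseq hDmeas hBmeas hBsub hBgood
    set Dstar : Set Ω := ⋃ n, (Dseq n : Set Ω) with hDstar
    have hDstarmeas : MeasurableSet[F1] Dstar := MeasurableSet.iUnion hDmeas
    have hDstarGood : Dstar ∈ Good := ⟨hDstarmeas, Bg, hBgmeas, hBgA, hBgae⟩
    have hDstar_le : P Dstar ≤ c := le_iSup (fun D : Good => P (D : Set Ω)) ⟨Dstar, hDstarGood⟩
    have hc_le : c ≤ P Dstar := by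
      refine ENNReal.le_of_forall_pos_le_add fun ε hε _ => ?_
      obtain ⟨n, hn⟩ := ENNReal.exists_inv_nat_lt (a := (ε : ℝ≥0∞))
        (by exact_mod_cast hε.ne')
      have h1 : (1 : ℝ≥0∞) / ((n : ℝ≥0∞) + 1) ≤ (ε : ℝ≥0∞) := by
        refine le_trans ?_ hn.le
        rw [one_div]
        exact ENNReal.inv_le_inv.mpr le_self_add
      have h2 : c ≤ P (Dseq n : Set Ω) + 1 / ((n : ℝ≥0∞) + 1) :=
        tsub_le_iff_right.mp (hDseq n)
      refine h2.trans (add_le_add ?_ h1)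
      exact measure_mono (subset_iUnion (fun m => (Dseq m : Set Ω)) n)
    have hcPD : c = P Dstar := le_antisymm hc_le hDstar_le
    -- claim : P (G \ Dstar) = 0
    have hGD : P (G \ Dstar) = 0 := by
      by_contra hne
      have hEpos : 0 < P (G \ Dstar) := pos_iff_ne_zero.mpr hne
      set E : Set Ω := G \ Dstar with hEdef
      have hEmeas1 : MeasurableSet[F1] E := hGmeas.diff hDstarmeas
      set A' : Set Ω := E ∩ A with hA'def
      have hA'meas : MeasurableSet[F2] A' := (hle _ hEmeas1).inter hA
      have hA'eq : cexpInd F1 F2 P A' =ᵐ[P] E.indicator (cexpInd F1 F2 P A) :=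
        cexpInd_inter P hA hEmeas1
      have hPA' : 0 < P A' := by
        by_contra hPA'
        push_neg at hPA'
        have h0 : P A' = 0 := le_antisymm hPA' zero_le
        have hnm : ∀ᵐ ω ∂P, ω ∉ A' := (measure_eq_zero_iff_ae_notMem (μ := P)).mp h0
        have hz : A'.indicator (fun _ => (1:ℝ)) =ᵐ[P] 0 := by
          filter_upwards [hnm] with ω hω
          simp [Set.indicator_of_notMem hω]
        have hz2 : cexpInd F1 F2 P A' =ᵐ[P] 0 := by
          unfold cexpInd
          refine (condExp_congr_ae hz).trans ?_
          rw [condExp_zero]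
        have hz3 : E.indicator (cexpInd F1 F2 P A) =ᵐ[P] 0 := hA'eq.symm.trans hz2
        have hnE : ∀ᵐ ω ∂P, ω ∉ E := by
          filter_upwards [hz3] with ω hω
          intro hωE
          have h1 : cexpInd F1 F2 P A ω = 0 := by
            rw [← Set.indicator_of_mem hωE (cexpInd F1 F2 P A)]
            exact hω
          have h2 : 0 < cexpInd F1 F2 P A ω := hωE.1
          exact absurd h1 h2.ne'
        have : P E = 0 := by
          rw [← measure_eq_zero_iff_ae_notMem] at hnE
          exact hnE
        exact absurd this hEpos.ne'
      obtain ⟨B', hB'meas, hB'sub, hSpos⟩ := h A' hA'meas hPA'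
      set S : Set Ω := {ω | 0 < cexpInd F1 F2 P B' ω ∧
        cexpInd F1 F2 P B' ω < cexpInd F1 F2 P A' ω} with hSdef
      have hSmeas1 : MeasurableSet[F1] S := by
        rw [hSdef, Set.setOf_and]
        exact (measSet_pos (cexpInd_meas P B')).inter
          (measSet_lt (cexpInd_meas P B') (cexpInd_meas P A'))
      have hSgood : ∀ᵐ ω ∂P, ω ∈ S → ω ∈ E ∧ (0 < cexpInd F1 F2 P B' ω ∧
          cexpInd F1 F2 P B' ω < cexpInd F1 F2 P A ω) := by
        filter_upwards [hA'eq] with ω hωeq hωS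
        obtain ⟨h1, h2⟩ := hωS
        by_cases hωE : ω ∈ E
        · refine ⟨hωE, h1, ?_⟩
          rwa [hωeq, Set.indicator_of_mem hωE] at h2
        · exfalso
          rw [hωeq, Set.indicator_of_notMem hωE] at h2
          exact absurd (h1.trans h2) (lt_irrefl 0)
      -- D* ∪ S is good
      set D2 : ℕ → Set Ω := fun n => if n = 0 then Dstar else S with hD2
      set B2 : ℕ → Set Ω := fun n => if n = 0 then Bg else B' with hB2
      have hD2meas : ∀ n, MeasurableSet[F1] (D2 n) := by
        intro n; by_cases hn : n = 0 <;> simp [hD2, hn, hDstarmeas, hSmeas1]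
      have hB2meas : ∀ n, MeasurableSet[F2] (B2 n) := by
        intro n; by_cases hn : n = 0 <;> simp [hB2, hn, hBgmeas, hB'meas]
      have hB2sub : ∀ n, B2 n ⊆ A := by
        intro n; by_cases hn : n = 0 <;>
          simp [hB2, hn, hBgA, hB'sub.trans inter_subset_right]
      have hD2good : ∀ n, ∀ᵐ ω ∂P, ω ∈ D2 n → 0 < cexpInd F1 F2 P (B2 n) ω ∧
          cexpInd F1 F2 P (B2 n) ω < cexpInd F1 F2 P A ω := by
        intro n
        by_cases hn : n = 0
        · simpa [hD2, hB2, hn] using hBgae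
        · simp only [hD2, hB2, if_neg hn]
          filter_upwards [hSgood] with ω hω hωS
          exact (hω hωS).2
      obtain ⟨Bg2, hBg2meas, hBg2A, hBg2ae⟩ :=
        glue_lemma hle P hA D2 B2 hD2meas hB2meas hB2sub hD2good
      have hD2union : ⋃ n, D2 n = Dstar ∪ S := by
        apply subset_antisymm
        · refine iUnion_subset fun n => ?_
          by_cases hn : n = 0 <;> simp [hD2, hn, subset_union_left, subset_union_right]
        · rintro ω (hω | hω)
          · exact mem_iUnion.mpr ⟨0, by simp [hD2, hω]⟩
          · exact mem_iUnion.mpr ⟨1, by simp [hD2, hω]⟩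
      rw [hD2union] at hBg2ae
      have hUGood : (Dstar ∪ S) ∈ Good :=
        ⟨hDstarmeas.union hSmeas1, Bg2, hBg2meas, hBg2A, hBg2ae⟩
      have hU_le : P (Dstar ∪ S) ≤ c :=
        le_iSup (fun D : Good => P (D : Set Ω)) ⟨Dstar ∪ S, hUGood⟩
      -- but P (Dstar ∪ S) = P Dstar + P (S \ Dstar) with P (S \ Dstar) > 0
      have hSD0 : P (S ∩ Dstar) = 0 := by
        rw [measure_eq_zero_iff_ae_notMem]
        filter_upwards [hSgood] with ω hω
        rintro ⟨hωS, hωD⟩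
        exact (hω hωS).1.2 hωD
      have hSdiffpos : 0 < P (S \ Dstar) := by
        have := measure_le_inter_add_diff P S Dstar
        rw [hSD0, zero_add] at this
        exact lt_of_lt_of_le hSpos this
      have hUnion_eq : P (Dstar ∪ S) = P Dstar + P (S \ Dstar) := by
        rw [← Set.union_diff_self]
        exact measure_union (disjoint_sdiff_self_right)
          (((hle _ hSmeas1).diff (hle _ hDstarmeas)))
      rw [hUnion_eq, ← hcPD] at hU_le
      have hfin : c ≠ ⊤ := hc_ne_top
      have : P (S \ Dstar) ≤ 0 := by
        have h2 : c + P (S \ Dstar) ≤ c + 0 := by simpa using hU_le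
        exact (ENNReal.add_le_add_iff_left hfin).mp h2
      exact absurd (le_antisymm this zero_le) hSdiffpos.ne'
    -- conclusion
    refine ⟨Bg, hBgmeas, hBgA, ?_⟩
    have h1 : ∀ᵐ ω ∂P, ω ∉ G \ Dstar := by
      rw [← measure_eq_zero_iff_ae_notMem]; exact hGD
    filter_upwards [h1, hBgae] with ω hω1 hω2 hpos
    have hωG : ω ∈ G := hpos
    have hωD : ω ∈ Dstar := by
      by_contra hcω
      exact hω1 ⟨hωG, hcω⟩
    exact hω2 hωD
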